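/- (Rabin; Mostowski — solvability of the word problem for linear groups) For every k, n : ℕ and every family of invertible matrices A : Fin k → GL (Fin n) ℚ, the predicate on List (Fin k × Bool) asserting that the image of a word w under the homomorphism FreeGroup.lift A : FreeGroup (Fin k) →* GL (Fin n) ℚ equals 1 is a ComputablePred; i.e., every finitely generated group of invertible rational matrices has decidable word problem. -/

import Mathlib

namespace RabinWP

/-- Finite sums of primrec functions are primrec. -/
theorem primrec_finsum {α : Type*} [Primcodable α] :
    ∀ {n : ℕ} {f : Fin n → α → ℕ}, (∀ m, Primrec (f m)) → Primrec fun a => ∑ m, f m a := by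
  intro n
  induction n with
  | zero => intro f _; simpa using Primrec.const 0
  | succ n ih =>
    intro f hf
    have : Primrec fun a => f 0 a + ∑ m : Fin n, f m.succ a :=
      Primrec.nat_add.comp (hf 0) (ih fun m => hf m.succ)
    exact this.of_eq fun a => by rw [Fin.sum_univ_succ]

/-- Functions out of `Fin k × Bool` are primrec. -/
theorem primrec_of_finDom {k : ℕ} {σ : Type*} [Primcodable σ] (f : Fin k × Bool → σ) :
    Primrec f := by
  have hg : ∀ g : Fin k → σ, Primrec g := by
    intro g
    have : Primrec₂ fun (i : Fin k) (_ : Unit) => g i :=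
      Primrec.fin_curry₁.2 fun i => Primrec.const (g i)
    exact (this.comp Primrec.id (Primrec.const ())).of_eq fun i => rfl
  have : Primrec fun p : Fin k × Bool => cond p.2 (f (p.1, true)) (f (p.1, false)) :=
    Primrec.cond Primrec.snd ((hg fun i => f (i, true)).comp .fst)
      ((hg fun i => f (i, false)).comp .fst)
  exact this.of_eq fun ⟨i, b⟩ => by cases b <;> rfl

/-- If `q.den ∣ d` then `d*q` is an integer, explicitly. -/
theorem cast_clear (q : ℚ) (d : ℕ) (h : q.den ∣ d) :
    ((q.num * (d / q.den : ℕ) : ℤ) : ℚ) = (d : ℚ) * q := by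
  have hd : (q.den : ℚ) * ((d / q.den : ℕ) : ℚ) = (d : ℚ) := by
    rw [← Nat.cast_mul, Nat.mul_div_cancel' h]
  have hq : (q.num : ℚ) = q * q.den := by
    rw [mul_comm, ← Rat.den_mul_eq_num]
  rw [Int.cast_mul, Int.cast_natCast, hq, ← hd]
  ring

/-- Pairs of ℕ-matrices representing a ℚ-matrix (as a difference). -/
abbrev M (n : ℕ) := Fin n → Fin n → ℕ

variable {n : ℕ}

/-- Interpretation of a pair of ℕ-matrices as a ℚ-matrix. -/
def phi (p : M n × M n) : Matrix (Fin n) (Fin n) ℚ :=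
  Matrix.of fun i j => (p.1 i j : ℚ) - (p.2 i j : ℚ)

/-- Multiplication on representatives. -/
def mulRep (p q : M n × M n) : M n × M n :=
  (fun i j => ∑ m, (p.1 i m * q.1 m j + p.2 i m * q.2 m j),
   fun i j => ∑ m, (p.1 i m * q.2 m j + p.2 i m * q.1 m j))

theorem phi_mulRep (p q : M n × M n) : phi (mulRep p q) = phi p * phi q := by
  ext i j
  simp only [phi, mulRep, Matrix.mul_apply, Matrix.of_apply]
  push_cast
  rw [← Finset.sum_sub_distrib]
  exact Finset.sum_congr rfl fun m _ => by ring

/-- Representative of the identity. -/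
def idRep : M n × M n := (fun i j => if i = j then 1 else 0, fun _ _ => 0)

theorem phi_idRep : phi (idRep : M n × M n) = 1 := by
  ext i j
  simp [phi, idRep, Matrix.one_apply]

theorem phi_eq_smul_one_iff (p : M n × M n) (s : ℕ) :
    phi p = (s : ℚ) • 1 ↔ p.1 = fun i j => (if i = j then s else 0) + p.2 i j := by
  constructor
  · intro h
    funext i j
    have h1 : phi p i j = ((s : ℚ) • (1 : Matrix (Fin n) (Fin n) ℚ)) i j := by rw [h]
    simp only [phi, Matrix.smul_apply, Matrix.one_apply, Matrix.of_apply, smul_eq_mul] at h1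
    have h2 : (p.1 i j : ℚ) = (if i = j then (s:ℚ) else 0) + p.2 i j := by
      rw [← sub_eq_iff_eq_add, h1]; split <;> simp
    have h3 : ((p.1 i j : ℕ) : ℚ) = (((if i = j then s else 0) + p.2 i j : ℕ) : ℚ) := by
      push_cast
      rw [h2]
    exact_mod_cast h3
  · intro h
    ext i j
    have := congrFun (congrFun h i) j
    simp only [phi, Matrix.smul_apply, Matrix.one_apply, Matrix.of_apply, this]
    push_cast
    split <;> simp

section Word

variable {k : ℕ} (A : Fin k → GL (Fin n) ℚ)

/-- The GL-element associated to a letter. -/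
def gl (l : Fin k × Bool) : GL (Fin n) ℚ := cond l.2 (A l.1) (A l.1)⁻¹

/-- The matrix associated to a letter. -/
def mat (l : Fin k × Bool) : Matrix (Fin n) (Fin n) ℚ := (gl A l : Matrix (Fin n) (Fin n) ℚ)

/-- A common denominator for all entries of all generator matrices and their inverses. -/
def dd : ℕ := ∏ l : Fin k × Bool, ∏ i : Fin n, ∏ j : Fin n, (mat A l i j).den

theorem den_dvd_dd (l : Fin k × Bool) (i j : Fin n) : (mat A l i j).den ∣ dd A := by
  refine Dvd.dvd.trans ?_ (Finset.dvd_prod_of_mem _ (Finset.mem_univ l))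
  refine Dvd.dvd.trans ?_ (Finset.dvd_prod_of_mem _ (Finset.mem_univ i))
  exact Finset.dvd_prod_of_mem _ (Finset.mem_univ j)

theorem dd_pos : 0 < dd A := by
  refine Finset.prod_pos fun l _ => Finset.prod_pos fun i _ => Finset.prod_pos fun j _ => ?_
  exact (mat A l i j).pos

/-- Representative of `dd • mat l`. -/
def rep (l : Fin k × Bool) : M n × M n :=
  (fun i j => ((mat A l i j).num * (dd A / (mat A l i j).den : ℕ)).toNat,
   fun i j => (-((mat A l i j).num * (dd A / (mat A l i j).den : ℕ))).toNat)

theorem phi_rep (l : Fin k × Bool) : phi (rep A l) = (dd A : ℚ) • mat A l := by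
  ext i j
  set z : ℤ := (mat A l i j).num * (dd A / (mat A l i j).den : ℕ) with hz
  have hcast : (z : ℚ) = (dd A : ℚ) * mat A l i j := cast_clear _ _ (den_dvd_dd A l i j)
  have : ((z.toNat : ℤ) : ℚ) - (((-z).toNat : ℤ) : ℚ) = (z : ℚ) := by
    rw [← Int.cast_sub]
    congr 1
    omega
  simp only [phi, rep, Matrix.smul_apply, Matrix.of_apply, smul_eq_mul, ← hz]
  rw [← hcast, ← this]
  push_cast
  ring

/-- The fold computing the representative of the product of a word, with the scale factor. -/
def fold (w : List (Fin k × Bool)) : (M n × M n) × ℕ :=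
  w.foldr (fun l s => (mulRep (rep A l) s.1, dd A * s.2)) (idRep, 1)

theorem fold_spec (w : List (Fin k × Bool)) :
    phi (fold A w).1 = (((fold A w).2 : ℕ) : ℚ) • (w.map (mat A)).prod ∧
      (fold A w).2 = dd A ^ w.length := by
  induction w with
  | nil => simp [fold, phi_idRep]
  | cons l t ih =>
    obtain ⟨ih1, ih2⟩ := ih
    have hf : fold A (l :: t) = (mulRep (rep A l) (fold A t).1, dd A * (fold A t).2) := rfl
    constructor
    · rw [hf]
      show phi (mulRep (rep A l) (fold A t).1) = _
      rw [phi_mulRep, phi_rep, ih1, List.map_cons, List.prod_cons]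
      push_cast
      rw [Matrix.smul_mul, Matrix.mul_smul, smul_smul]
    · rw [hf]
      show dd A * (fold A t).2 = _
      rw [ih2, List.length_cons, pow_succ]
      ring

/-- The Boolean decision function. -/
def dec (w : List (Fin k × Bool)) : Bool :=
  decide ((fold A w).1.1 =
    fun i j => (if i = j then (fold A w).2 else 0) + (fold A w).1.2 i j)

theorem dec_iff (w : List (Fin k × Bool)) :
    dec A w = true ↔ (w.map (mat A)).prod = 1 := by
  obtain ⟨h1, h2⟩ := fold_spec A w
  rw [dec, decide_eq_true_iff, ← phi_eq_smul_one_iff, h1]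
  have hs : ((fold A w).2 : ℚ) ≠ 0 := by
    rw [h2]
    exact_mod_cast pow_ne_zero _ (dd_pos A).ne' 
  constructor
  · intro h
    exact smul_right_injective _ hs h
  · intro h
    rw [h]

end Word

end RabinWP

namespace RabinWP

open Primrec

theorem primrec_matrix_mk {α : Type*} [Primcodable α] {n : ℕ} (E : α → Fin n → Fin n → ℕ)
    (h : Primrec fun x : (α × Fin n) × Fin n => E x.1.1 x.1.2 x.2) : Primrec E :=
  Primrec.fin_curry.2 (Primrec.fin_curry.2 h)

theorem primrec_app2 {α : Type*} [Primcodable α] {n : ℕ} {X : α → Fin n → Fin n → ℕ}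
    {i j : α → Fin n} (hX : Primrec X) (hi : Primrec i) (hj : Primrec j) :
    Primrec fun x => X x (i x) (j x) :=
  Primrec.fin_app.comp (Primrec.fin_app.comp hX hi) hj

section MulRepPrimrec

variable {n : ℕ}

theorem primrec_mulRep_aux
    (f g f' g' : (M n × M n) × (M n × M n) → M n)
    (hf : Primrec f) (hg : Primrec g) (hf' : Primrec f') (hg' : Primrec g') :
    Primrec fun p : (M n × M n) × (M n × M n) =>
      (fun i j => ∑ m, (f p i m * g p m j + f' p i m * g' p m j) : M n) := by
  apply primrec_matrix_mk
  apply primrec_finsum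
  intro m
  have ha : Primrec fun x : (((M n × M n) × (M n × M n)) × Fin n) × Fin n => x.1.1 :=
    fst.comp fst
  have hi : Primrec fun x : (((M n × M n) × (M n × M n)) × Fin n) × Fin n => x.1.2 :=
    snd.comp fst
  have hj : Primrec fun x : (((M n × M n) × (M n × M n)) × Fin n) × Fin n => x.2 := snd
  exact Primrec.nat_add.comp
    (Primrec.nat_mul.comp (primrec_app2 (hf.comp ha) hi (const m))
      (primrec_app2 (hg.comp ha) (const m) hj))
    (Primrec.nat_mul.comp (primrec_app2 (hf'.comp ha) hi (const m))
      (primrec_app2 (hg'.comp ha) (const m) hj))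

theorem primrec_mulRep : Primrec₂ (@mulRep n) := by
  have h1 := primrec_mulRep_aux (n := n) (fun p => p.1.1) (fun p => p.2.1) (fun p => p.1.2)
    (fun p => p.2.2) (fst.comp fst) (fst.comp snd) (snd.comp fst) (snd.comp snd)
  have h2 := primrec_mulRep_aux (n := n) (fun p => p.1.1) (fun p => p.2.2) (fun p => p.1.2)
    (fun p => p.2.1) (fst.comp fst) (snd.comp snd) (snd.comp fst) (fst.comp snd)
  exact h1.pair h2

end MulRepPrimrec

section Comp

open Primrec

variable {k n : ℕ} (A : Fin k → GL (Fin n) ℚ)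

/-- One step of the fold. -/
def step (l : Fin k × Bool) (s : (M n × M n) × ℕ) : (M n × M n) × ℕ :=
  (mulRep (rep A l) s.1, dd A * s.2)

theorem fold_eq_foldr (w : List (Fin k × Bool)) : fold A w = w.foldr (step A) (idRep, 1) := rfl

theorem primrec_step : Primrec₂ (step A) :=
  Primrec.pair
    (primrec_mulRep.comp ((primrec_of_finDom (rep A)).comp fst) (fst.comp snd))
    (Primrec.nat_mul.comp (const (dd A)) (snd.comp snd))

theorem primrec_fold : Primrec (fold A) := by
  have h := Primrec.list_foldr (f := @id (List (Fin k × Bool)))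
    (g := fun _ => ((idRep, 1) : (M n × M n) × ℕ))
    (h := fun _ p => step A p.1 p.2) Primrec.id (const _)
    (((primrec_step A).comp (fst.comp snd) (snd.comp snd)).to₂)
  exact h.of_eq fun w => (fold_eq_foldr A w).symm

theorem primrec_dec : Primrec (dec A) := by
  have hfold := primrec_fold A
  have hG1 : Primrec fun w : List (Fin k × Bool) => (fold A w).1.1 :=
    fst.comp (fst.comp hfold)
  have hG2 : Primrec fun w : List (Fin k × Bool) =>
      (fun i j => (if i = j then (fold A w).2 else 0) + (fold A w).1.2 i j : M n) := by
    apply primrec_matrix_mk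
    exact Primrec.nat_add.comp
      (Primrec.ite (Primrec.eq.comp (snd.comp fst) snd)
        ((snd.comp hfold).comp (fst.comp fst)) (const 0))
      (primrec_app2 ((snd.comp (fst.comp hfold)).comp (fst.comp fst)) (snd.comp fst) snd)
  have h : PrimrecPred fun w : List (Fin k × Bool) =>
      (fold A w).1.1 = fun i j => (if i = j then (fold A w).2 else 0) + (fold A w).1.2 i j :=
    Primrec.eq.comp hG1 hG2
  exact h.decide.of_eq fun w => by simp [dec]

theorem word_iff (w : List (Fin k × Bool)) :
    (FreeGroup.lift A) (FreeGroup.mk w) = 1 ↔ dec A w = true := by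
  rw [dec_iff]
  have h1 : (FreeGroup.lift A) (FreeGroup.mk w) = (w.map (gl A)).prod := by
    rw [FreeGroup.lift_mk]
    rfl
  rw [h1, Units.ext_iff, Units.val_one]
  have h2 := map_list_prod (Units.coeHom (Matrix (Fin n) (Fin n) ℚ)) (w.map (gl A))
  simp only [Units.coeHom_apply, List.map_map] at h2
  rw [h2]
  rfl

end Comp

end RabinWP

/-- (Rabin; Mostowski) Every finitely generated group of invertible rational matrices has
decidable word problem. -/
theorem linear_group_word_problem_decidable (k n : ℕ) (A : Fin k → GL (Fin n) ℚ) :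
    ComputablePred fun w : List (Fin k × Bool) =>
      (FreeGroup.lift A) (FreeGroup.mk w) = 1 := by
  rw [ComputablePred.computable_iff]
  exact ⟨RabinWP.dec A, (RabinWP.primrec_dec A).to_comp,
    funext fun w => propext (RabinWP.word_iff A w)⟩
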